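/- Let φ(x) = x² + p x + q with p, q > 0 and complex (non-real) roots (p² < 4q). Then 1/φ is not completely monotone on [0,∞). -/

import Mathlib

open Complex Real

private lemma myHasDerivAt_im {F : ℝ → ℂ} {F' : ℂ} {x : ℝ} (h : HasDerivAt F F' x) :
    HasDerivAt (fun y => (F y).im) F'.im x := by
  simpa [Function.comp_def] using (Complex.imCLM.hasFDerivAt.comp x h.hasFDerivAt).hasDerivAt

private lemma iter_im (z : ℂ) (hz : z.im ≠ 0) (c : ℂ) (k : ℕ) (x : ℝ) :
    iteratedDeriv k (fun y : ℝ => (c * ((y:ℂ) - z)⁻¹).im) x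
      = (c * ((-1)^k * (Nat.factorial k : ℂ) * (((x:ℂ) - z)⁻¹)^(k+1))).im := by
  induction k generalizing x with
  | zero => simp
  | succ k ih =>
    rw [iteratedDeriv_succ]
    have hfun : iteratedDeriv k (fun y : ℝ => (c * ((y:ℂ) - z)⁻¹).im)
        = fun x : ℝ => ((c * ((-1)^k * (Nat.factorial k : ℂ))) * ((x:ℂ) - z) ^ (-(k+1) : ℤ)).im := by
      funext y
      rw [ih y]
      congr 1
      rw [zpow_neg, show ((k:ℤ)+1) = ((k+1:ℕ):ℤ) by push_cast; ring, zpow_natCast, ← inv_pow]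
      ring_nf
    rw [hfun]
    have hne : ((x:ℂ) - z) ≠ 0 := fun h => hz (by simpa using congrArg Complex.im h.symm)
    have h1 : HasDerivAt (fun w : ℂ => w ^ (-(k+1) : ℤ))
        ((-(k+1):ℤ) * ((x:ℂ) - z) ^ ((-(k+1):ℤ)-1)) ((x:ℂ) - z) :=
      hasDerivAt_zpow _ _ (Or.inl hne)
    have h2 : HasDerivAt (fun w : ℂ => (w - z) ^ (-(k+1):ℤ))
        ((-(k+1):ℤ) * ((x:ℂ) - z) ^ ((-(k+1):ℤ)-1)) (x:ℂ) := by
      simpa [Function.comp_def] using h1.comp (x:ℂ) ((hasDerivAt_id (x:ℂ)).sub_const z)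
    have h3 := ((h2.const_mul (c * ((-1)^k * (Nat.factorial k : ℂ)))).comp_ofReal)
    have h4 := myHasDerivAt_im h3
    rw [h4.deriv]
    congr 1
    have : ((-(k+1):ℤ) : ℂ) = -(k+1) := by push_cast; ring
    rw [show ((-(k+1):ℤ)-1) = (-(k+2):ℤ) by ring, zpow_neg,
      show ((k:ℤ)+2) = ((k+2:ℕ):ℤ) by push_cast; ring, zpow_natCast, ← inv_pow, this]
    rw [Nat.factorial_succ]
    push_cast
    ring

private lemma sin_part (u : ℂ) (hre : 0 < u.re) (him : 0 < u.im) :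
    ∃ k : ℕ, (u ^ (k+1)).im < 0 := by
  have hu : u ≠ 0 := fun h => by simp [h] at him
  set θ := Complex.arg u with hθ
  have hθpos : 0 < θ := by
    rcases lt_or_eq_of_le (Complex.arg_nonneg_iff.mpr him.le) with h | h
    · exact h
    · exact absurd (Complex.arg_eq_zero_iff.mp h.symm).2 him.ne'
  have hθlt : θ < π/2 := Complex.arg_lt_pi_div_two_iff.mpr (Or.inl hre)
  set n : ℕ := ⌊π/θ⌋₊ + 1 with hn
  have h1 : π < n * θ := by
    have := Nat.lt_floor_add_one (π/θ)
    have : π/θ < (n:ℝ) := by push_cast [hn]; linarith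
    linarith [(div_lt_iff₀ hθpos).mp this]
  have h2 : (n:ℝ) * θ ≤ π + θ := by
    have hf : (⌊π/θ⌋₊ : ℝ) ≤ π/θ := Nat.floor_le (by positivity)
    have : (⌊π/θ⌋₊ : ℝ) * θ ≤ π := by
      calc (⌊π/θ⌋₊ : ℝ) * θ ≤ (π/θ) * θ := by nlinarith
        _ = π := by field_simp
    push_cast [hn]; linarith
  have hsin : Real.sin (n * θ) < 0 := by
    rw [show (n:ℝ)*θ = ((n:ℝ)*θ - π) + π by ring, Real.sin_add_pi]
    have : 0 < Real.sin ((n:ℝ)*θ - π) :=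
      Real.sin_pos_of_pos_of_lt_pi (by linarith) (by linarith [Real.pi_gt_three])
    linarith
  have habs : 0 < ‖u‖ := norm_pos_iff.mpr hu
  have himn : (u ^ n).im = (‖u‖)^n * Real.sin (n*θ) := by
    conv_lhs => rw [← Complex.norm_mul_exp_arg_mul_I u]
    rw [mul_pow, ← Complex.ofReal_pow, ← Complex.exp_nat_mul,
      show ((n:ℂ) * (↑θ * I)) = ((n * θ : ℝ) : ℂ) * I by push_cast; ring,
      Complex.im_ofReal_mul, Complex.exp_ofReal_mul_I_im]
  refine ⟨n - 1, ?_⟩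
  have : n - 1 + 1 = n := by omega
  rw [this, himn]
  exact mul_neg_of_pos_of_neg (pow_pos habs n) hsin

theorem inv_quadratic_complex_roots_not_completely_monotone
    (p q : ℝ) (hp : 0 < p) (hq : 0 < q) (hdisc : p ^ 2 < 4 * q) :
    ¬ (∀ k : ℕ, ∀ x ≥ (0:ℝ),
        0 ≤ (-1 : ℝ) ^ k * iteratedDeriv k (fun y => 1 / (y ^ 2 + p * y + q)) x) := by
  intro h
  set β : ℝ := Real.sqrt (q - p^2/4) with hβdef
  have hβsq : β * β = q - p^2/4 := Real.mul_self_sqrt (by nlinarith)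
  have hβpos : 0 < β := Real.sqrt_pos.mpr (by nlinarith)
  set z : ℂ := ⟨-(p/2), β⟩ with hz
  have hzim : z.im ≠ 0 := hβpos.ne'
  have hrep : (fun y : ℝ => 1 / (y ^ 2 + p * y + q))
      = fun y : ℝ => (((β⁻¹ : ℝ) : ℂ) * ((y:ℂ) - z)⁻¹).im := by
    funext y
    have h1 : ((y:ℂ) - z).im = -β := by simp [hz]
    have h2 : ((y:ℂ) - z).re = y + p/2 := by simp [hz]
    rw [Complex.im_ofReal_mul, Complex.inv_im, Complex.normSq_apply, h1, h2]
    have hden : (y+p/2)*(y+p/2) + -β * -β = y^2+p*y+q := by nlinarith [hβsq]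
    have hpos : 0 < y^2+p*y+q := by nlinarith [sq_nonneg (y + p/2)]
    rw [hden, neg_neg]
    field_simp
  have hsub : (((0:ℝ):ℂ) - z) ≠ 0 := fun hc => hzim (by simpa using congrArg Complex.im hc.symm)
  have hnsq : 0 < Complex.normSq (((0:ℝ):ℂ) - z) := Complex.normSq_pos.mpr hsub
  set u : ℂ := (((0:ℝ):ℂ) - z)⁻¹ with hu
  have hure : 0 < u.re := by
    rw [hu, Complex.inv_re]
    have : (((0:ℝ):ℂ) - z).re = p/2 := by simp [hz]
    rw [this]; positivity
  have huim : 0 < u.im := by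
    rw [hu, Complex.inv_im]
    have : (((0:ℝ):ℂ) - z).im = -β := by simp [hz]
    rw [this, neg_neg]; positivity
  obtain ⟨k, hneg⟩ := sin_part u hure huim
  have hk := h k 0 le_rfl
  rw [hrep, iter_im z hzim _ k 0] at hk
  have hklean : ((((β⁻¹ : ℝ) : ℂ)) * ((-1)^k * (Nat.factorial k : ℂ) * u^(k+1))).im
      = β⁻¹ * (-1:ℝ)^k * (Nat.factorial k : ℝ) * (u^(k+1)).im := by
    rw [show (((β⁻¹ : ℝ) : ℂ)) * ((-1)^k * (Nat.factorial k : ℂ) * u^(k+1))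
        = ((β⁻¹ * (-1:ℝ)^k * (Nat.factorial k : ℝ) : ℝ) : ℂ) * u^(k+1) by push_cast; ring,
      Complex.im_ofReal_mul]
  rw [hu] at hklean
  rw [hklean] at hk
  have hsq : ((-1:ℝ)^k)*((-1:ℝ)^k) = 1 := by rw [← pow_add, ← two_mul, pow_mul]; norm_num
  have heq : (-1:ℝ)^k * (β⁻¹ * (-1:ℝ)^k * (Nat.factorial k : ℝ) * (u^(k+1)).im)
      = β⁻¹ * (Nat.factorial k : ℝ) * (u^(k+1)).im := by
    rw [show (-1:ℝ)^k * (β⁻¹ * (-1:ℝ)^k * (Nat.factorial k : ℝ) * (u^(k+1)).im)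
        = ((-1:ℝ)^k*(-1:ℝ)^k) * (β⁻¹ * (Nat.factorial k : ℝ) * (u^(k+1)).im) by ring,
      hsq, one_mul]
  rw [hu] at heq
  rw [heq] at hk
  have hfac : (0:ℝ) < Nat.factorial k := by exact_mod_cast Nat.factorial_pos k
  have : β⁻¹ * (Nat.factorial k : ℝ) * (u^(k+1)).im < 0 :=
    mul_neg_of_pos_of_neg (by positivity) hneg
  rw [hu] at this
  linarith
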